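/- Let n ≥ 2 and let N be a subgroup of the symmetric group Sym(Fin n) which is perfect (N equals its own commutator subgroup) and whose natural action on Fin n is primitive. Let P = F ⋊ N be the progenitor, where F is the free product of n copies of ℤ/2ℤ indexed by Fin n and N acts by permuting the free factors. Then the commutator subgroup P′ of P has index exactly 2 in P, and P′ is perfect, i.e. P″ = P′. -/

import Mathlib

open Monoid

/-- The free product of `n` copies of `ℤ/2ℤ`, indexed by `Fin n`. -/
abbrev FP1 (n : ℕ) := Monoid.CoprodI (fun _ : Fin n => Multiplicative (ZMod 2))

/-- The symmetric generator `t_i`. -/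
def tFP1 {n : ℕ} (i : Fin n) : FP1 n :=
  Monoid.CoprodI.of (i := i) (Multiplicative.ofAdd (1 : ZMod 2))

/-- The endomorphism of the free product induced by a permutation of `Fin n`. -/
def fp1Hom {n : ℕ} (σ : Equiv.Perm (Fin n)) : FP1 n →* FP1 n :=
  Monoid.CoprodI.lift
    (fun i => Monoid.CoprodI.of (M := fun _ : Fin n => Multiplicative (ZMod 2)) (i := σ i))

lemma fp1Hom_comp {n : ℕ} (σ τ : Equiv.Perm (Fin n)) :
    (fp1Hom (n := n) σ).comp (fp1Hom τ) = fp1Hom (σ * τ) := by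
  apply Monoid.CoprodI.ext_hom
  intro i
  ext x
  simp [fp1Hom, Monoid.CoprodI.lift_of]

lemma fp1Hom_one {n : ℕ} : fp1Hom (n := n) 1 = MonoidHom.id _ := by
  apply Monoid.CoprodI.ext_hom
  intro i
  ext x
  simp [fp1Hom, Monoid.CoprodI.lift_of]

/-- The action of `Sym(Fin n)` on the free product, permuting the free factors. -/
def fp1Aut (n : ℕ) : Equiv.Perm (Fin n) →* MulAut (FP1 n) :=
  MonoidHom.mk' (fun σ =>
    { toFun := fp1Hom σ
      invFun := fp1Hom σ⁻¹
      left_inv := fun x => by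
        have h := fp1Hom_comp (n := n) σ⁻¹ σ
        rw [inv_mul_cancel, fp1Hom_one] at h
        exact DFunLike.congr_fun h x
      right_inv := fun x => by
        have h := fp1Hom_comp (n := n) σ σ⁻¹
        rw [mul_inv_cancel, fp1Hom_one] at h
        exact DFunLike.congr_fun h x
      map_mul' := map_mul _ })
    (fun σ τ => by
      ext x
      exact (DFunLike.congr_fun (fp1Hom_comp (n := n) σ τ) x).symm)

/-- The progenitor `2^{⋆n} : N`, for a subgroup `N` of `Sym(Fin n)`. -/
abbrev Progenitor1 (n : ℕ) (N : Subgroup (Equiv.Perm (Fin n))) :=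
  FP1 n ⋊[(fp1Aut n).comp N.subtype] ↥N

/-- An action is preprimitive if it is (pre)transitive and every block is trivial,
i.e. it preserves no nontrivial partition. -/
def IsPreprimitive (G X : Type*) [Group G] [MulAction G X] : Prop :=
  MulAction.IsPretransitive G X ∧
    ∀ B : Set X, MulAction.IsBlock G B → MulAction.IsTrivialBlock B


section Aux2

open SemidirectProduct

variable {n : ℕ}

lemma tFP1_sq (i : Fin n) : tFP1 i * tFP1 i = 1 := by
  rw [tFP1, ← map_mul]
  have h : (Multiplicative.ofAdd (1 : ZMod 2)) * (Multiplicative.ofAdd (1 : ZMod 2)) = 1 := by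
    decide
  rw [h, map_one]

lemma fp1Hom_t (σ : Equiv.Perm (Fin n)) (i : Fin n) : fp1Hom σ (tFP1 i) = tFP1 (σ i) := by
  simp [fp1Hom, tFP1]

/-- The parity homomorphism on the free product. -/
def phiF (n : ℕ) : FP1 n →* Multiplicative (ZMod 2) :=
  Monoid.CoprodI.lift (fun _ => MonoidHom.id _)

lemma phiF_t (i : Fin n) : phiF n (tFP1 i) = Multiplicative.ofAdd 1 := by
  simp [phiF, tFP1]

/-- The parity homomorphism on the progenitor. -/
def phiP (N : Subgroup (Equiv.Perm (Fin n))) :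
    Progenitor1 n N →* Multiplicative (ZMod 2) :=
  SemidirectProduct.lift (phiF n) 1 (by
    intro σ
    apply Monoid.CoprodI.ext_hom
    intro i
    ext x
    simp [phiF, fp1Aut, fp1Hom])

lemma progConj (N : Subgroup (Equiv.Perm (Fin n))) (σ : ↥N) (f : FP1 n) :
    (inr σ : Progenitor1 n N) * inl f * (inr σ)⁻¹ = inl (fp1Hom σ.1 f) := by
  rw [← map_inv, ← SemidirectProduct.inl_aut]
  rfl

end Aux2

/-- If `N ≤ Sym(Fin n)` (`n ≥ 2`) is perfect and acts primitively on `Fin n`,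
then the commutator subgroup `P′` of the progenitor `P = 2^{⋆n} : N` has index exactly `2`
in `P`, and `P′` is perfect, i.e. `P″ = P′`. -/
theorem progenitor_commutator_index_two_and_perfect (n : ℕ) (hn : 2 ≤ n)
    (N : Subgroup (Equiv.Perm (Fin n)))
    (hperf : commutator ↥N = ⊤)
    (hprim : IsPreprimitive ↥N (Fin n)) :
    (commutator (Progenitor1 n N)).index = 2 ∧
      ⁅commutator (Progenitor1 n N), commutator (Progenitor1 n N)⁆ =
        commutator (Progenitor1 n N) := by
  classical
  open SemidirectProduct in
  have hn0 : 0 < n := by omega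
  set P := Progenitor1 n N with hP
  let i0 : Fin n := ⟨0, hn0⟩
  set φ : P →* Multiplicative (ZMod 2) := phiP N with hφ
  set D : Subgroup P := ⁅commutator P, commutator P⁆ with hD
  set r : P →* P ⧸ D := QuotientGroup.mk' D with hr
  have hker_r : ∀ x : P, r x = 1 ↔ x ∈ D := fun x => QuotientGroup.eq_one_iff x
  have hφ_inl : ∀ f : FP1 n, φ (inl f) = phiF n f := fun f => SemidirectProduct.lift_inl _ _ _ f
  have hφ_inr : ∀ σ : ↥N, φ (inr σ) = 1 := fun σ => SemidirectProduct.lift_inr _ _ _ σ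
  -- images of elements of N lie in D
  have hinrD : ∀ σ : ↥N, (inr σ : P) ∈ D := by
    intro σ
    have h1 : σ ∈ ⁅(⊤ : Subgroup ↥N), (⊤ : Subgroup ↥N)⁆ := by
      rw [← commutator_def, hperf]; exact Subgroup.mem_top σ
    have h2 : (inr σ : P) ∈ Subgroup.map (inr : ↥N →* P) ⁅(⊤ : Subgroup ↥N), (⊤ : Subgroup ↥N)⁆ :=
      Subgroup.mem_map_of_mem _ h1
    rw [Subgroup.map_commutator] at h2
    have h3 : Subgroup.map (inr : ↥N →* P) ⊤ ≤ commutator P := by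
      rintro x ⟨y, -, rfl⟩
      have h1' : y ∈ ⁅(⊤ : Subgroup ↥N), (⊤ : Subgroup ↥N)⁆ := by
        rw [← commutator_def, hperf]; exact Subgroup.mem_top y
      have h2' : (inr y : P) ∈ Subgroup.map (inr : ↥N →* P) ⁅(⊤ : Subgroup ↥N), (⊤ : Subgroup ↥N)⁆ :=
        Subgroup.mem_map_of_mem _ h1'
      rw [Subgroup.map_commutator] at h2'
      rw [commutator_def]
      exact Subgroup.commutator_mono le_top le_top h2'
    exact Subgroup.commutator_mono h3 h3 h2
  have hDC : D ≤ commutator P := Subgroup.commutator_le_left _ _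
  have hinrC : ∀ σ : ↥N, (inr σ : P) ∈ commutator P := fun σ => hDC (hinrD σ)
  have hr_inr : ∀ σ : ↥N, r (inr σ) = 1 := fun σ => (hker_r _).2 (hinrD σ)
  -- the elements inl (t_i t_j) lie in the commutator subgroup
  have hconj2 : ∀ (σ : ↥N) (i j : Fin n),
      (inr σ : P) * inl (tFP1 i * tFP1 j) * (inr σ)⁻¹ = inl (tFP1 (σ.1 i) * tFP1 (σ.1 j)) := by
    intro σ i j
    rw [progConj, map_mul, fp1Hom_t, fp1Hom_t]
  have hsmul : ∀ (σ : ↥N) (i : Fin n), σ • i = σ.1 i := by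
    intro σ i
    rfl
  have hTC : ∀ i j : Fin n, (inl (tFP1 i * tFP1 j) : P) ∈ commutator P := by
    intro i j
    obtain ⟨σ, hσ⟩ := hprim.1.exists_smul_eq j i
    rw [hsmul] at hσ
    have htinv : (inl (tFP1 j) : P)⁻¹ = inl (tFP1 j) := by
      rw [← map_inv, inv_eq_of_mul_eq_one_right (tFP1_sq j)]
    open scoped commutatorElement in
    have heq : (inl (tFP1 i * tFP1 j) : P) = ⁅(inr σ : P), inl (tFP1 j)⁆ := by
      rw [commutatorElement_def, progConj, fp1Hom_t, hσ, htinv, ← map_mul]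
    rw [heq, commutator_def]
    exact Subgroup.commutator_mem_commutator (Subgroup.mem_top _) (Subgroup.mem_top _)
  -- commutativity of images of commutator elements in P/D
  have hrcomm : ∀ x y : P, x ∈ commutator P → y ∈ commutator P → Commute (r x) (r y) := by
    intro x y hx hy
    open scoped commutatorElement in
    have h1 : r ⁅x, y⁆ = 1 := (hker_r _).2 (Subgroup.commutator_mem_commutator hx hy)
    rw [map_commutatorElement] at h1
    exact commutatorElement_eq_one_iff_commute.mp h1
  -- the function w
  set w : Fin n → Fin n → P ⧸ D := fun i j => r (inl (tFP1 i * tFP1 j)) with hw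
  have hw_cocycle : ∀ i j k : Fin n, w i j * w j k = w i k := by
    intro i j k
    have h1 : (tFP1 i * tFP1 j) * (tFP1 j * tFP1 k) = tFP1 i * tFP1 k := by
      rw [mul_assoc, ← mul_assoc (tFP1 j), tFP1_sq, one_mul]
    rw [hw]
    simp only
    rw [← map_mul, ← map_mul, h1]
  have hw_one : ∀ i : Fin n, w i i = 1 := by
    intro i
    rw [hw]
    simp only
    rw [tFP1_sq, map_one, map_one]
  have hw_conj : ∀ (σ : ↥N) (i j : Fin n), w (σ.1 i) (σ.1 j) = w i j := by
    intro σ i j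
    rw [hw]
    simp only
    rw [← hconj2, map_mul, map_mul, hr_inr, map_inv, hr_inr, one_mul, inv_one, mul_one]
  have hw_inv : ∀ i j : Fin n, w j i = (w i j)⁻¹ := by
    intro i j
    have h := hw_cocycle i j i
    rw [hw_one i] at h
    exact eq_inv_of_mul_eq_one_right h
  have hw_commute : ∀ i j k l : Fin n, Commute (w i j) (w k l) :=
    fun i j k l => hrcomm _ _ (hTC i j) (hTC k l)
  have hw_indep : ∀ (σ : ↥N) (i j : Fin n), w i (σ.1 i) = w j (σ.1 j) := by
    intro σ i j
    have h1 : w i (σ.1 i) = w i j * w j (σ.1 i) := (hw_cocycle i j (σ.1 i)).symm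
    have h2 : w j (σ.1 i) = w j (σ.1 j) * w (σ.1 j) (σ.1 i) := (hw_cocycle j (σ.1 j) (σ.1 i)).symm
    have h3 : w (σ.1 j) (σ.1 i) = w j i := hw_conj σ j i
    have h4 : w j i = (w i j)⁻¹ := hw_inv i j
    rw [h1, h2, h3, h4, ← mul_assoc, (hw_commute i j j (σ.1 j)).eq,
      mul_assoc, mul_inv_cancel, mul_one]
  -- the homomorphism c : N → P/D
  let c : ↥N →* P ⧸ D := MonoidHom.mk' (fun σ => w i0 (σ.1 i0)) (by
    intro σ τ
    have hmul : ((σ * τ : ↥N) : Equiv.Perm (Fin n)) i0 = σ.1 (τ.1 i0) := rfl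
    have h1 : w i0 (σ.1 (τ.1 i0)) = w i0 (τ.1 i0) * w (τ.1 i0) (σ.1 (τ.1 i0)) :=
      (hw_cocycle _ _ _).symm
    have h2 : w (τ.1 i0) (σ.1 (τ.1 i0)) = w i0 (σ.1 i0) := hw_indep σ (τ.1 i0) i0
    show w i0 ((σ * τ).1 i0) = w i0 (σ.1 i0) * w i0 (τ.1 i0)
    rw [hmul, h1, h2, (hw_commute i0 (τ.1 i0) i0 (σ.1 i0)).eq])
  have hc1 : ∀ σ : ↥N, w i0 (σ.1 i0) = 1 := by
    have hker : commutator ↥N ≤ c.ker := by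
      rw [commutator_def]
      apply Subgroup.commutator_le.2
      intro a _ b _
      rw [MonoidHom.mem_ker, map_commutatorElement]
      exact commutatorElement_eq_one_iff_commute.2 (hw_commute i0 (a.1 i0) i0 (b.1 i0))
    intro σ
    have hσ : σ ∈ commutator ↥N := by rw [hperf]; exact Subgroup.mem_top σ
    exact MonoidHom.mem_ker.1 (hker hσ)
  have hw1 : ∀ i j : Fin n, w i j = 1 := by
    intro i j
    obtain ⟨σ, hσ⟩ := hprim.1.exists_smul_eq i j
    rw [hsmul] at hσ
    rw [← hσ, hw_indep σ i i0]
    exact hc1 σ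
  -- all generators have the same image in P/D
  have hb2 : r (inl (tFP1 i0)) * r (inl (tFP1 i0)) = 1 := by
    rw [← map_mul, ← map_mul]
    exact hw1 i0 i0
  have hbt : ∀ i : Fin n, r (inl (tFP1 i)) = r (inl (tFP1 i0)) := by
    intro i
    have h1 : r (inl (tFP1 i0)) * r (inl (tFP1 i)) = 1 := by
      rw [← map_mul, ← map_mul]
      exact hw1 i0 i
    have h2 := eq_inv_of_mul_eq_one_right h1
    rw [h2]
    exact inv_eq_of_mul_eq_one_right hb2
  -- the parity claim
  have claim : ∀ f : FP1 n,
      (phiF n f = 1 ∧ r (inl f) = 1) ∨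
        (phiF n f = Multiplicative.ofAdd 1 ∧ r (inl f) = r (inl (tFP1 i0))) := by
    intro f
    induction f using Monoid.CoprodI.induction_on with
    | one =>
      left
      constructor <;> simp
    | of i m =>
      rcases (by decide : ∀ x : Multiplicative (ZMod 2), x = 1 ∨ x = Multiplicative.ofAdd 1) m
        with h | h
      · subst h
        left
        constructor <;> simp
      · subst h
        right
        exact ⟨phiF_t i, hbt i⟩
    | mul x y ihx ihy =>
      have hxy : phiF n (x * y) = phiF n x * phiF n y := map_mul _ _ _
      have rxy : r (inl (x * y)) = r (inl x) * r (inl y) := by rw [map_mul, map_mul]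
      rcases ihx with ⟨p1, q1⟩ | ⟨p1, q1⟩ <;> rcases ihy with ⟨p2, q2⟩ | ⟨p2, q2⟩
      · left
        exact ⟨by rw [hxy, p1, p2, one_mul], by rw [rxy, q1, q2, one_mul]⟩
      · right
        exact ⟨by rw [hxy, p1, p2, one_mul], by rw [rxy, q1, q2, one_mul]⟩
      · right
        exact ⟨by rw [hxy, p1, p2, mul_one], by rw [rxy, q1, q2, mul_one]⟩
      · left
        refine ⟨by rw [hxy, p1, p2]; decide, by rw [rxy, q1, q2]; exact hb2⟩
  -- the kernel of φ is contained in D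
  have hkerφ : φ.ker ≤ D := by
    intro g hg
    have hg1 : φ g = 1 := hg
    have hgd := SemidirectProduct.inl_left_mul_inr_right g
    have hφg : phiF n g.left = 1 := by
      rw [← hgd, map_mul, hφ_inl, hφ_inr, mul_one] at hg1
      exact hg1
    rcases claim g.left with ⟨-, h2⟩ | ⟨h1, -⟩
    · have hrg : r g = 1 := by rw [← hgd, map_mul, h2, one_mul, hr_inr]
      exact (hker_r g).1 hrg
    · rw [h1] at hφg
      exact absurd hφg (by decide)
  have hCker : commutator P ≤ φ.ker := Abelianization.commutator_subset_ker φ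
  have hCeq : commutator P = φ.ker := le_antisymm hCker (hkerφ.trans hDC)
  have hDeq : D = commutator P := le_antisymm hDC (le_trans (le_of_eq hCeq) hkerφ)
  refine ⟨?_, hDeq⟩
  have hsurj : Function.Surjective φ := by
    intro x
    rcases (by decide : ∀ y : Multiplicative (ZMod 2), y = 1 ∨ y = Multiplicative.ofAdd 1) x
      with h | h
    · exact ⟨1, by rw [map_one, h]⟩
    · exact ⟨inl (tFP1 i0), by rw [hφ_inl, phiF_t, h]⟩
  rw [hCeq, Subgroup.index_ker, MonoidHom.range_eq_top.2 hsurj, Subgroup.card_top,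
    Nat.card_eq_fintype_card]
  rfl
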